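/- Suppose the open set condition holds with bounded open set V. Then (ψ^k(V̄))_k is a decreasing sequence of compact sets, and the limit set E of Theorem 1 satisfies E = ⋂_{k=1}^∞ ψ^k(V̄), where V̄ denotes the closure of V. -/
import Mathlib


open Metric Filter Set

/-- The composition `ψ_{j 0} ∘ ψ_{j 1} ∘ ⋯ ∘ ψ_{j (k-1)}`. -/
noncomputable def iterMap {X : Type*} {m : ℕ} (ψ : Fin m → X → X) :
    (k : ℕ) → (Fin k → Fin m) → X → X
  | 0, _ => id
  | k + 1, j => ψ (j 0) ∘ iterMap ψ k (fun i => j i.succ)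

/-- The index set `L^k = N_1 × ⋯ × N_k`, realized as the finset of functions
`j : Fin k → Fin m` whose `i`-th component lies in `N (i+1)`. -/
def Lk {m : ℕ} (N : ℕ → Finset (Fin m)) (k : ℕ) : Finset (Fin k → Fin m) :=
  Finset.univ.filter fun j => ∀ i : Fin k, j i ∈ N (i + 1)

/-- `ψ^k(F) = ⋃_{(j_1,…,j_k) ∈ L^k} (ψ_{j_1} ∘ ⋯ ∘ ψ_{j_k})(F)`. -/
noncomputable def psiImage {X : Type*} {m : ℕ} (ψ : Fin m → X → X)
    (N : ℕ → Finset (Fin m)) (k : ℕ) (F : Set X) : Set X :=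
  ⋃ j ∈ Lk N k, iterMap ψ k j '' F


lemma iterMap_snoc {X : Type*} {m : ℕ} (ψ : Fin m → X → X) :
    ∀ (k : ℕ) (j : Fin (k+1) → Fin m),
    iterMap ψ (k+1) j = iterMap ψ k (fun i => j i.castSucc) ∘ ψ (j (Fin.last k))
  | 0, j => rfl
  | (k+1), j => by
    show ψ (j 0) ∘ iterMap ψ (k+1) (fun i => j i.succ) = _
    rw [iterMap_snoc ψ k (fun i => j i.succ)]
    show ψ (j 0) ∘ (iterMap ψ k (fun i => j i.succ.castSucc) ∘ ψ (j (Fin.last k).succ)) =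
      ψ ((fun i : Fin (k+1) => j i.castSucc) 0) ∘
        iterMap ψ k (fun i => j (i.succ.castSucc)) ∘ ψ (j (Fin.last (k+1)))
    simp [Fin.succ_last]

section Aux
variable {n m : ℕ} (ψ : Fin m → EuclideanSpace ℝ (Fin n) → EuclideanSpace ℝ (Fin n))
  (r : Fin m → ℝ)

lemma psi_continuous (hψ : ∀ j x y, dist (ψ j x) (ψ j y) = r j * dist x y) (j : Fin m) :
    Continuous (ψ j) := by
  refine Metric.continuous_iff.mpr fun x ε hε => ⟨ε / (|r j| + 1), by positivity, fun y hy => ?_⟩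
  have h1 : dist (ψ j y) (ψ j x) = r j * dist y x := hψ j y x
  have h2 : r j * dist y x ≤ |r j| * dist y x :=
    mul_le_mul_of_nonneg_right (le_abs_self _) dist_nonneg
  have h3 : |r j| * dist y x < (|r j| + 1) * (ε / (|r j| + 1)) := by
    have hpos : (0:ℝ) < |r j| + 1 := by positivity
    calc |r j| * dist y x ≤ (|r j| + 1) * dist y x := by nlinarith [dist_nonneg (x := y) (y := x)]
      _ < (|r j| + 1) * (ε / (|r j| + 1)) := by
          exact mul_lt_mul_of_pos_left hy hpos
  have h4 : (|r j| + 1) * (ε / (|r j| + 1)) = ε := by field_simp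
  linarith [h1, h2, h3]

lemma iterMap_continuous (hψ : ∀ j x y, dist (ψ j x) (ψ j y) = r j * dist x y) :
    ∀ (k : ℕ) (j : Fin k → Fin m), Continuous (iterMap ψ k j)
  | 0, _ => continuous_id
  | (k+1), j => (psi_continuous ψ r hψ (j 0)).comp (iterMap_continuous hψ k fun i => j i.succ)

end Aux

/-- Under the open set condition with bounded open set `V`, the sets `ψ^k(V̄)` form a
decreasing sequence of compact sets whose intersection over `k ≥ 1` is the limit set `E`. -/
theorem stmt7 {n m : ℕ}
    (ψ : Fin m → EuclideanSpace ℝ (Fin n) → EuclideanSpace ℝ (Fin n)) (r : Fin m → ℝ)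
    (hψ : ∀ j x y, dist (ψ j x) (ψ j y) = r j * dist x y) (hr : ∀ j, r j < 1)
    (N : ℕ → Finset (Fin m)) (hN : ∀ k, 1 ≤ k → (N k).Nonempty)
    (V : Set (EuclideanSpace ℝ (Fin n))) (hVo : IsOpen V)
    (hVb : Bornology.IsBounded V) (hVne : V.Nonempty)
    (hmap : ∀ j, ψ j '' V ⊆ V)
    (hdisj : ∀ i j, i ≠ j → Disjoint (ψ i '' V) (ψ j '' V))
    (E : Set (EuclideanSpace ℝ (Fin n))) (hE : IsCompact E) (hEne : E.Nonempty)
    (hconv : ∀ F : Set (EuclideanSpace ℝ (Fin n)), IsCompact F → F.Nonempty →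
      Tendsto (fun k => hausdorffDist (psiImage ψ N k F) E) atTop (nhds 0)) :
    (∀ k, IsCompact (psiImage ψ N k (closure V))) ∧
    (Antitone fun k => psiImage ψ N k (closure V)) ∧
    E = ⋂ k : ℕ, ⋂ (_ : 1 ≤ k), psiImage ψ N k (closure V) := by
  set F : Set (EuclideanSpace ℝ (Fin n)) := closure V with hF
  have hFc : IsCompact F := Metric.isCompact_of_isClosed_isBounded isClosed_closure hVb.closure
  have hFne : F.Nonempty := hVne.closure
  have hmapF : ∀ j, ψ j '' F ⊆ F := fun j =>
    (image_closure_subset_closure_image (psi_continuous ψ r hψ j)).trans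
      (closure_mono (hmap j))
  set S : ℕ → Set (EuclideanSpace ℝ (Fin n)) := fun k => psiImage ψ N k F with hS
  have hcomp : ∀ k, IsCompact (S k) := fun k =>
    (Lk N k).finite_toSet.isCompact_biUnion fun j _ =>
      hFc.image (iterMap_continuous ψ r hψ k j)
  have hne : ∀ k, (S k).Nonempty := by
    intro k
    obtain ⟨x, hx⟩ := hFne
    refine ⟨iterMap ψ k (fun i => (hN (i + 1) (by omega)).choose) x, ?_⟩
    refine mem_iUnion₂.mpr ⟨_, ?_, mem_image_of_mem _ hx⟩
    simp only [Lk, Finset.mem_filter, Finset.mem_univ, true_and]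
    exact fun i => (hN (i + 1) (by omega)).choose_spec
  have hanti : Antitone S := by
    refine antitone_nat_of_succ_le fun k x hx => ?_
    obtain ⟨j, hj, hxj⟩ := mem_iUnion₂.mp hx
    obtain ⟨y, hy, rfl⟩ := (mem_image _ _ _).mp hxj
    rw [iterMap_snoc]
    refine mem_iUnion₂.mpr ⟨fun i => j i.castSucc, ?_,
      mem_image_of_mem _ (hmapF _ (mem_image_of_mem _ hy))⟩
    simp only [Lk, Finset.mem_filter, Finset.mem_univ, true_and] at hj ⊢
    intro i
    have := hj i.castSucc
    simpa using this
  have hedist : ∀ k, EMetric.hausdorffEdist (S k) E ≠ ⊤ := fun k =>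
    hausdorffEdist_ne_top_of_nonempty_of_bounded (hne k) hEne
      (hcomp k).isBounded hE.isBounded
  have htend := hconv F hFc hFne
  refine ⟨hcomp, hanti, Subset.antisymm ?_ ?_⟩
  · intro x hx
    refine mem_iInter₂.mpr fun k hk => ?_
    have h0 : infDist x (S k) ≤ 0 := by
      refine ge_of_tendsto htend (eventually_atTop.mpr ⟨k, fun k' hk' => ?_⟩)
      calc infDist x (S k) ≤ infDist x (S k') :=
            infDist_le_infDist_of_subset (hanti hk') (hne k')
        _ ≤ hausdorffDist E (S k') := infDist_le_hausdorffDist_of_mem hx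
            (by rw [EMetric.hausdorffEdist_comm]; exact hedist k')
        _ = hausdorffDist (S k') E := hausdorffDist_comm
    exact ((hcomp k).isClosed.mem_iff_infDist_zero (hne k)).mpr
      (le_antisymm h0 infDist_nonneg)
  · intro x hx
    have hx' : ∀ k, 1 ≤ k → x ∈ S k := fun k hk => mem_iInter₂.mp hx k hk
    have h0 : infDist x E ≤ 0 := by
      refine ge_of_tendsto htend (eventually_atTop.mpr ⟨1, fun k hk => ?_⟩)
      exact infDist_le_hausdorffDist_of_mem (hx' k hk) (hedist k)
    exact (hE.isClosed.mem_iff_infDist_zero hEne).mpr (le_antisymm h0 infDist_nonneg)
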